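/- Let Ω ⊆ ℝ^d bounded open, m a nonnegative set function on open cubes. Define m⁻_*(x) := liminf_{δ→0} inf{ m(Q)/|Q| : Q an open cube with x ∈ Q, diam(Q) < δ }. Let b > 0 and E ⊆ Ω satisfy E ⊆ {x ∈ Ω : m⁻_*(x) < b}. Then m^♯(E) ≤ b|E|. -/

import Mathlib

open Filter Set Topology MeasureTheory

/-- `Q` is an open axis-parallel cube of `ℝ^d` (with positive side length). -/
def IsOpenCube {d : ℕ} (Q : Set (Fin d → ℝ)) : Prop :=
  ∃ (c : Fin d → ℝ) (r : ℝ), 0 < r ∧ Q = {y | ∀ i, y i ∈ Set.Ioo (c i) (c i + r)}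

/-- `𝒬 ∈ F_δ(E)`: a countable family of open cubes of diameter `< δ` with pairwise
disjoint closures, each meeting `E`, covering `E` up to Lebesgue measure zero. -/
def CubeFam {d : ℕ} (E : Set (Fin d → ℝ)) (δ : ℝ)
    (𝒬 : Set (Set (Fin d → ℝ))) : Prop :=
  𝒬.Countable ∧
  (∀ Q ∈ 𝒬, IsOpenCube Q ∧ Metric.diam Q < δ ∧ (Q ∩ E).Nonempty) ∧
  𝒬.Pairwise (fun Q Q' => Disjoint (closure Q) (closure Q')) ∧
  volume (E \ ⋃₀ 𝒬) = 0

/-- The Carathéodory-type construction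
`m^♯(E) := sup_{δ>0} inf { Σ_i m(Q_i) : {Q_i} ∈ F_δ(E) }` (and `m^♯(∅) = 0`, which holds
automatically since the empty family belongs to `F_δ(∅)`). -/
noncomputable def msharp {d : ℕ} (m : Set (Fin d → ℝ) → ENNReal)
    (E : Set (Fin d → ℝ)) : ENNReal :=
  ⨆ (δ : ℝ) (_ : 0 < δ), ⨅ (𝒬 : Set (Set (Fin d → ℝ))) (_ : CubeFam E δ 𝒬),
    ∑' Q : 𝒬, m Q

/-- `m⁻_*(x) := liminf_{δ→0⁺} inf { m(Q)/|Q| : x ∈ Q an open cube, diam(Q) < δ }`. -/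
noncomputable def mMinus {d : ℕ} (m : Set (Fin d → ℝ) → ENNReal)
    (x : Fin d → ℝ) : ENNReal :=
  Filter.liminf
    (fun δ : ℝ => ⨅ Q ∈ {Q | IsOpenCube Q ∧ x ∈ Q ∧ Metric.diam Q < δ}, m Q / volume Q)
    (nhdsWithin 0 (Set.Ioi 0))

namespace Stmt17Aux

variable {d : ℕ}

/-- The open cube with corner `c` and side `r`. -/
def oC (c : Fin d → ℝ) (r : ℝ) : Set (Fin d → ℝ) :=
  Set.pi Set.univ fun i => Set.Ioo (c i) (c i + r)

/-- The closed cube with corner `c` and side `r`. -/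
def cC (c : Fin d → ℝ) (r : ℝ) : Set (Fin d → ℝ) :=
  Set.pi Set.univ fun i => Set.Icc (c i) (c i + r)

lemma oC_eq (c : Fin d → ℝ) (r : ℝ) :
    oC c r = {y | ∀ i, y i ∈ Set.Ioo (c i) (c i + r)} := by
  ext y; simp [oC]

lemma isOpenCube_oC {c : Fin d → ℝ} {r : ℝ} (hr : 0 < r) : IsOpenCube (oC c r) :=
  ⟨c, r, hr, oC_eq c r⟩

lemma oC_subset_cC (c : Fin d → ℝ) (r : ℝ) : oC c r ⊆ cC c r :=
  Set.pi_mono fun i _ => Set.Ioo_subset_Icc_self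

lemma closure_oC {c : Fin d → ℝ} {r : ℝ} (hr : 0 < r) : closure (oC c r) = cC c r := by
  rw [oC, closure_pi_set]
  exact Set.pi_congr rfl fun i _ => closure_Ioo (by linarith)

lemma interior_cC (c : Fin d → ℝ) (r : ℝ) : interior (cC c r) = oC c r := by
  rw [cC, interior_pi_set Set.finite_univ]
  exact Set.pi_congr rfl fun i _ => interior_Icc

lemma measurableSet_oC (c : Fin d → ℝ) (r : ℝ) : MeasurableSet (oC c r) :=
  MeasurableSet.univ_pi fun i => measurableSet_Ioo

lemma isClosed_cC (c : Fin d → ℝ) (r : ℝ) : IsClosed (cC c r) :=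
  isClosed_set_pi fun i _ => isClosed_Icc

lemma volume_oC (c : Fin d → ℝ) (r : ℝ) : volume (oC c r) = ENNReal.ofReal r ^ d := by
  rw [oC, volume_pi_pi]
  simp [Real.volume_Ioo]

lemma volume_cC (c : Fin d → ℝ) (r : ℝ) : volume (cC c r) = ENNReal.ofReal r ^ d := by
  rw [cC, volume_pi_pi]
  simp [Real.volume_Icc]

lemma volume_oC_ne_zero {c : Fin d → ℝ} {r : ℝ} (hr : 0 < r) : volume (oC c r) ≠ 0 := by
  rw [volume_oC]
  exact pow_ne_zero _ (by simpa using hr)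

lemma volume_oC_ne_top (c : Fin d → ℝ) (r : ℝ) : volume (oC c r) ≠ ⊤ := by
  rw [volume_oC]
  exact ENNReal.pow_ne_top ENNReal.ofReal_ne_top

lemma volume_cC_diff_oC {c : Fin d → ℝ} {r : ℝ} : volume (cC c r \ oC c r) = 0 := by
  rw [measure_diff (oC_subset_cC c r) (measurableSet_oC c r).nullMeasurableSet
    (volume_oC_ne_top c r), volume_oC, volume_cC, tsub_self]
lemma cC_subset_closedBall {c x : Fin d → ℝ} {r : ℝ} (hr : 0 < r) (hx : x ∈ oC c r) :
    cC c r ⊆ Metric.closedBall x r := by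
  intro y hy
  rw [Metric.mem_closedBall, dist_pi_le_iff hr.le]
  intro i
  have h1 := hy i (Set.mem_univ i)
  have h2 := hx i (Set.mem_univ i)
  simp only [Set.mem_Icc] at h1
  simp only [Set.mem_Ioo] at h2
  rw [Real.dist_eq, abs_sub_le_iff]
  constructor <;> linarith [h1.1, h1.2, h2.1, h2.2]

lemma isBounded_cC {c : Fin d → ℝ} {r : ℝ} (hr : 0 < r) :
    Bornology.IsBounded (cC c r) := by
  refine Bornology.IsBounded.subset (Metric.isBounded_closedBall (x := c) (r := r)) ?_
  intro y hy
  rw [Metric.mem_closedBall, dist_pi_le_iff hr.le]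
  intro i
  have h1 := hy i (Set.mem_univ i)
  simp only [Set.mem_Icc] at h1
  rw [Real.dist_eq, abs_sub_le_iff]
  constructor <;> linarith [h1.1, h1.2]

lemma diam_cC_eq {c : Fin d → ℝ} {r : ℝ} (hr : 0 < r) :
    Metric.diam (cC c r) = Metric.diam (oC c r) := by
  rw [← closure_oC hr, Metric.diam_closure]

lemma side_le_diam {c : Fin d → ℝ} {r : ℝ} (hd : 0 < d) (hr : 0 < r) :
    r ≤ Metric.diam (oC c r) := by
  rw [← diam_cC_eq hr]
  have i0 : Fin d := ⟨0, hd⟩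
  have hc : c ∈ cC c r := fun i _ => ⟨le_refl _, by linarith⟩
  have hz : (fun i => c i + r) ∈ cC c r := by
    intro i _
    show c i ≤ c i + r ∧ c i + r ≤ c i + r
    exact ⟨by linarith, le_rfl⟩
  have h1 : dist (c i0) (c i0 + r) ≤ dist c (fun i => c i + r) :=
    dist_le_pi_dist c (fun i => c i + r) i0
  have h2 : dist (c i0) (c i0 + r) = r := by
    rw [Real.dist_eq]
    simp [abs_of_nonneg hr.le]
  calc r = dist (c i0) (c i0 + r) := h2.symm
    _ ≤ dist c (fun i => c i + r) := h1
    _ ≤ Metric.diam (cC c r) := Metric.dist_le_diam_of_mem (isBounded_cC hr) hc hz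

/-- Key construction: at a point with `mMinus m x < b`, there are arbitrarily small
open cubes containing `x` with `m Q ≤ b * volume Q`. -/
lemma exists_good_cube (m : Set (Fin d → ℝ) → ENNReal) (b : ENNReal)
    {x : Fin d → ℝ} (hx : mMinus m x < b) {η : ℝ} (hη : 0 < η) :
    ∃ (c : Fin d → ℝ) (r : ℝ), 0 < r ∧ r ≤ η ∧ x ∈ oC c r ∧
      Metric.diam (oC c r) < η ∧ m (oC c r) ≤ b * volume (oC c r) := by
  have hfreq : ∃ᶠ δ' in nhdsWithin (0:ℝ) (Set.Ioi 0),
      (⨅ Q ∈ {Q | IsOpenCube Q ∧ x ∈ Q ∧ Metric.diam Q < δ'}, m Q / volume Q) < b :=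
    frequently_lt_of_liminf_lt (by isBoundedDefault) hx
  rw [Filter.frequently_iff] at hfreq
  obtain ⟨δ', hδ'mem, hδ'⟩ := hfreq (Ioo_mem_nhdsGT_of_mem ⟨le_refl (0:ℝ), hη⟩)
  simp only [iInf_lt_iff, Set.mem_setOf_eq] at hδ'
  obtain ⟨Q, ⟨hQcube, hxQ, hdiam⟩, hlt⟩ := hδ'
  obtain ⟨c, r, hr, rfl⟩ := hQcube
  rw [← oC_eq c r] at hxQ hdiam hlt
  have hvol0 : volume (oC c r) ≠ 0 := volume_oC_ne_zero hr
  have hvoltop : volume (oC c r) ≠ ⊤ := volume_oC_ne_top c r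
  have hm : m (oC c r) ≤ b * volume (oC c r) :=
    ((ENNReal.div_lt_iff (Or.inl hvol0) (Or.inl hvoltop)).1 hlt).le
  have hdiamη : Metric.diam (oC c r) < η := lt_of_lt_of_le hdiam hδ'mem.2.le
  rcases Nat.eq_zero_or_pos d with hd | hd
  · subst hd
    have huniv : ∀ (c' : Fin 0 → ℝ) (r' : ℝ), oC c' r' = Set.univ := by
      intro c' r'; ext y; simp [oC]
    have hQη : oC c r = oC c η := by rw [huniv, huniv]
    refine ⟨c, η, hη, le_refl _, ?_, ?_, ?_⟩
    · rw [← hQη]; exact hxQ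
    · rw [← hQη]; exact hdiamη
    · rw [← hQη]; exact hm
  · exact ⟨c, r, hr, (side_le_diam hd hr).trans hdiamη.le, hxQ, hdiamη, hm⟩

end Stmt17Aux

open Stmt17Aux in
/-- (Lemma 7.5 (ii).) If `E ⊆ {x ∈ Ω : m⁻_*(x) < b}` then `m^♯(E) ≤ b |E|`. -/
theorem stmt17 {d : ℕ} (Ω : Set (Fin d → ℝ))
    (hΩopen : IsOpen Ω) (hΩbd : Bornology.IsBounded Ω)
    (m : Set (Fin d → ℝ) → ENNReal) (hm0 : m ∅ = 0)
    (b : ENNReal) (hb : 0 < b)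
    (E : Set (Fin d → ℝ)) (hEΩ : E ⊆ Ω) (hE : ∀ x ∈ E, mMinus m x < b) :
    msharp m E ≤ b * volume E := by
  rw [msharp]
  refine iSup₂_le fun δ hδ => ?_
  by_cases hE0 : volume E = 0
  · -- the empty family is admissible since `E` is null
    have hfam : CubeFam E δ (∅ : Set (Set (Fin d → ℝ))) :=
      ⟨Set.countable_empty, by simp, Set.pairwise_empty _, by simpa using hE0⟩
    calc (⨅ (𝒬 : Set (Set (Fin d → ℝ))) (_ : CubeFam E δ 𝒬), ∑' Q : 𝒬, m Q)
        ≤ ∑' Q : (∅ : Set (Set (Fin d → ℝ))), m Q := iInf₂_le _ hfam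
      _ = 0 := tsum_empty
      _ ≤ b * volume E := zero_le'
  rcases eq_top_or_lt_top b with rfl | hbtop
  · rw [ENNReal.top_mul hE0]; exact le_top
  have hb0 : b ≠ 0 := hb.ne'
  have hbt : b ≠ ⊤ := hbtop.ne
  have hEfin : volume E ≠ ⊤ := ((hΩbd.subset hEΩ).measure_lt_top).ne
  refine ENNReal.le_of_forall_pos_le_add fun ε hε _ => ?_
  have hεb : (ε : ENNReal) / b ≠ 0 := by
    simp only [ne_eq, ENNReal.div_eq_zero_iff, not_or]
    exact ⟨by exact_mod_cast hε.ne', hbt⟩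
  obtain ⟨U, hEU, hUopen, hUvol⟩ := Set.exists_isOpen_lt_add E hEfin hεb
  classical
  -- the Vitali family of admissible closed cubes
  set t : Set (((Fin d → ℝ) × ℝ) × (Fin d → ℝ)) :=
    {p | 0 < p.1.2 ∧ p.2 ∈ E ∧ p.2 ∈ oC p.1.1 p.1.2 ∧ Metric.diam (oC p.1.1 p.1.2) < δ ∧
      cC p.1.1 p.1.2 ⊆ U ∧ m (oC p.1.1 p.1.2) ≤ b * volume (oC p.1.1 p.1.2)} with ht_def
  have hB : ∀ p ∈ t, cC p.1.1 p.1.2 ⊆ Metric.closedBall p.2 p.1.2 :=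
    fun p hp => cC_subset_closedBall hp.1 hp.2.2.1
  have μB : ∀ p ∈ t, volume (Metric.closedBall p.2 (3 * p.1.2)) ≤
      ((6:NNReal) ^ d : NNReal) * volume (cC p.1.1 p.1.2) := by
    intro p hp
    have hr : (0:ℝ) < p.1.2 := hp.1
    rw [Real.volume_pi_closedBall _ (by positivity : (0:ℝ) ≤ 3 * p.1.2), volume_cC,
      Fintype.card_fin, show (2:ℝ) * (3 * p.1.2) = 6 * p.1.2 from by ring,
      ENNReal.ofReal_pow (by positivity), ENNReal.ofReal_mul (by norm_num : (0:ℝ) ≤ 6), mul_pow]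
    refine mul_le_mul_left (le_of_eq ?_) _
    rw [ENNReal.coe_pow]
    norm_num
  have ht : ∀ p ∈ t, (interior (cC p.1.1 p.1.2)).Nonempty := by
    intro p hp
    rw [interior_cC]
    exact ⟨p.2, hp.2.2.1⟩
  have h't : ∀ p ∈ t, IsClosed (cC p.1.1 p.1.2) := fun p _ => isClosed_cC _ _
  have hf : ∀ x ∈ E, ∀ ε₀ > (0:ℝ), ∃ p ∈ t, p.1.2 ≤ ε₀ ∧ p.2 = x := by
    intro x hx ε₀ hε₀
    have hxU : x ∈ U := hEU hx
    obtain ⟨ρ, hρ, hball⟩ := Metric.isOpen_iff.1 hUopen x hxU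
    have hη : (0:ℝ) < min δ (min ε₀ (ρ / 2)) := by positivity
    obtain ⟨c, r, hr, hrle, hxc, hdiam, hm⟩ := exists_good_cube m b (hE x hx) hη
    refine ⟨((c, r), x), ⟨hr, hx, hxc, lt_of_lt_of_le hdiam (min_le_left _ _), ?_, hm⟩,
      hrle.trans ((min_le_right _ _).trans (min_le_left _ _)), rfl⟩
    -- the closed cube is contained in `U`
    refine (cC_subset_closedBall hr hxc).trans ?_
    refine (Metric.closedBall_subset_ball ?_).trans hball
    have : r ≤ ρ / 2 := hrle.trans ((min_le_right _ _).trans (min_le_right _ _))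
    linarith
  obtain ⟨u, hut, hucnt, hudisj, hucov⟩ :=
    Vitali.exists_disjoint_covering_ae volume E t ((6:NNReal) ^ d)
      (fun p => p.1.2) (fun p => p.2) (fun p => cC p.1.1 p.1.2) hB μB ht h't hf
  set f : ((Fin d → ℝ) × ℝ) × (Fin d → ℝ) → Set (Fin d → ℝ) :=
    fun p => oC p.1.1 p.1.2 with hf_def
  have hinj : Set.InjOn f u := by
    intro p hp q hq hfeq
    by_contra hne
    have hdis := hudisj hp hq hne
    have hBeq : cC p.1.1 p.1.2 = cC q.1.1 q.1.2 := by
      rw [← closure_oC (hut hp).1, ← closure_oC (hut hq).1]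
      exact congrArg closure hfeq
    have hxp : p.2 ∈ cC p.1.1 p.1.2 := oC_subset_cC _ _ (hut hp).2.2.1
    have hxp' : p.2 ∈ cC q.1.1 q.1.2 := hBeq ▸ hxp
    exact (Set.not_disjoint_iff.2 ⟨p.2, hxp, hxp'⟩) hdis
  set 𝒬 : Set (Set (Fin d → ℝ)) := f '' u with h𝒬_def
  have hfam : CubeFam E δ 𝒬 := by
    refine ⟨hucnt.image _, ?_, ?_, ?_⟩
    · rintro Q ⟨p, hp, rfl⟩
      have hpt := hut hp
      exact ⟨isOpenCube_oC hpt.1, hpt.2.2.2.1, ⟨p.2, hpt.2.2.1, hpt.2.1⟩⟩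
    · rintro Q ⟨p, hp, rfl⟩ Q' ⟨q, hq, rfl⟩ hne
      have hpq : p ≠ q := fun h => hne (by rw [h])
      rw [hf_def]
      simp only
      rw [closure_oC (hut hp).1, closure_oC (hut hq).1]
      exact hudisj hp hq hpq
    · -- covering up to measure zero
      have hsub : E \ ⋃₀ 𝒬 ⊆ (E \ ⋃ p ∈ u, cC p.1.1 p.1.2) ∪
          ⋃ p ∈ u, (cC p.1.1 p.1.2 \ oC p.1.1 p.1.2) := by
        intro y hy
        by_cases hyc : y ∈ ⋃ p ∈ u, cC p.1.1 p.1.2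
        · right
          obtain ⟨p, hp, hyp⟩ := Set.mem_iUnion₂.1 hyc
          refine Set.mem_biUnion hp ⟨hyp, fun hyo => ?_⟩
          exact hy.2 ⟨f p, ⟨p, hp, rfl⟩, hyo⟩
        · exact Or.inl ⟨hy.1, hyc⟩
      refine measure_mono_null hsub (measure_union_null hucov ?_)
      exact (measure_biUnion_null_iff hucnt).2 fun p _ => volume_cC_diff_oC
  have hsum : ∑' Q : 𝒬, m (Q : Set (Fin d → ℝ)) = ∑' p : u, m (f p) := by
    rw [h𝒬_def]
    exact ((Equiv.Set.imageOfInjOn f u hinj).tsum_eq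
      (fun Q : (f '' u : Set (Set (Fin d → ℝ))) => m (Q : Set (Fin d → ℝ)))).symm
  have hbound : ∑' p : u, m (f p) ≤ b * volume E + ε := by
    calc ∑' p : u, m (f p)
        ≤ ∑' p : u, b * volume (f p) :=
          ENNReal.tsum_le_tsum fun p => (hut p.2).2.2.2.2.2
      _ = b * ∑' p : u, volume (f p) :=
          ENNReal.tsum_mul_left
      _ ≤ b * ∑' p : u, volume (cC (↑p : ((Fin d → ℝ) × ℝ) × (Fin d → ℝ)).1.1
            (↑p : ((Fin d → ℝ) × ℝ) × (Fin d → ℝ)).1.2) :=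
          mul_le_mul_right (ENNReal.tsum_le_tsum fun p => measure_mono (oC_subset_cC _ _)) _
      _ = b * volume (⋃ p ∈ u, cC p.1.1 p.1.2) := by
          rw [measure_biUnion hucnt hudisj fun p _ => (isClosed_cC _ _).measurableSet]
      _ ≤ b * volume U := by
          refine mul_le_mul_right (measure_mono ?_) _
          exact Set.iUnion₂_subset fun p hp => (hut hp).2.2.2.2.1
      _ ≤ b * (volume E + ε / b) := mul_le_mul_right hUvol.le _
      _ = b * volume E + ε := by rw [mul_add, ENNReal.mul_div_cancel hb0 hbt]
  exact le_trans (iInf₂_le 𝒬 hfam) (le_trans (le_of_eq hsum) hbound)
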